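/- Let (S, I₁, I₂, I₁₂, R) be a solution of the coinfection model with all components nonnegative, N(0) > 0, b > μ₃', and suppose μ₃' is the largest death rate, i.e. μ₀ ≤ μ₃', μ₄' ≤ μ₃', μ₁' ≤ μ₃', μ₂' ≤ μ₃'. Then for all t ≥ 0, N(t) ≥ 1 / ( (b/(K(b−μ₃')))(1 − e^{−(b−μ₃')t}) + (1/N(0)) e^{−(b−μ₃')t} ). In particular N(t) ≥ min{ K(b−μ₃')/b, N(0) } for all t ≥ 0, and liminf_{t→∞} N(t) ≥ K(b−μ₃')/b. -/

import Mathlib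

open Filter Topology

set_option maxHeartbeats 1000000

/-- For a nonnegative solution of the coinfection model with `N 0 > 0`,
`b > μ₃'` and `μ₃'` the largest death rate, the total population satisfies
`N t ≥ 1 / ((b/(K(b-μ₃')))(1 - e^{-(b-μ₃')t}) + (1/N 0) e^{-(b-μ₃')t})` for all `t ≥ 0`;
in particular `N t ≥ min (K(b-μ₃')/b) (N 0)` and `liminf N ≥ K(b-μ₃')/b`. -/
theorem stmt_2
    (b K α1 α2 α3 β1 β2 γ1 γ2 η1 η2 ρ1 ρ2 ρ3 μ0 μ1' μ2' μ3' μ4' : ℝ)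
    (hb : 0 < b) (hK : 0 < K) (hα1 : 0 < α1) (hα2 : 0 < α2) (hα3 : 0 < α3)
    (hβ1 : 0 < β1) (hβ2 : 0 < β2) (hγ1 : 0 < γ1) (hγ2 : 0 < γ2)
    (hη1 : 0 < η1) (hη2 : 0 < η2) (hρ1 : 0 < ρ1) (hρ2 : 0 < ρ2) (hρ3 : 0 < ρ3)
    (hμ0 : 0 < μ0) (hμ1' : 0 < μ1') (hμ2' : 0 < μ2') (hμ3' : 0 < μ3') (hμ4' : 0 < μ4')
    (hbμ3 : μ3' < b)
    (hμ03 : μ0 ≤ μ3') (hμ43 : μ4' ≤ μ3') (hμ13 : μ1' ≤ μ3') (hμ23 : μ2' ≤ μ3')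
    (μ1 μ2 μ3 : ℝ) (hμ1 : μ1 = ρ1 + μ1') (hμ2 : μ2 = ρ2 + μ2') (hμ3 : μ3 = ρ3 + μ3')
    (S I1 I2 I12 R N : ℝ → ℝ)
    (hN : ∀ t, N t = S t + I1 t + I2 t + I12 t + R t)
    (hS : ∀ t ≥ (0:ℝ), HasDerivAt S
      ((b * (1 - N t / K) - α1 * I1 t - α2 * I2 t - (β1 + β2 + α3) * I12 t - μ0) * S t) t)
    (hI1 : ∀ t ≥ (0:ℝ), HasDerivAt I1
      ((b * (1 - N t / K) + α1 * S t - η1 * I12 t - γ1 * I2 t - μ1) * I1 t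
        + β1 * S t * I12 t) t)
    (hI2 : ∀ t ≥ (0:ℝ), HasDerivAt I2
      ((b * (1 - N t / K) + α2 * S t - η2 * I12 t - γ2 * I1 t - μ2) * I2 t
        + β2 * S t * I12 t) t)
    (hI12 : ∀ t ≥ (0:ℝ), HasDerivAt I12
      ((b * (1 - N t / K) + α3 * S t + η1 * I1 t + η2 * I2 t - μ3) * I12 t
        + (γ1 + γ2) * I1 t * I2 t) t)
    (hR : ∀ t ≥ (0:ℝ), HasDerivAt R
      ((b * (1 - N t / K) - μ4') * R t + ρ1 * I1 t + ρ2 * I2 t + ρ3 * I12 t) t)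
    (hnonneg : ∀ t ≥ (0:ℝ), 0 ≤ S t ∧ 0 ≤ I1 t ∧ 0 ≤ I2 t ∧ 0 ≤ I12 t ∧ 0 ≤ R t)
    (hN0 : 0 < N 0) :
    (∀ t ≥ (0:ℝ), N t ≥ 1 / ((b / (K * (b - μ3'))) * (1 - Real.exp (-(b - μ3') * t))
        + (1 / N 0) * Real.exp (-(b - μ3') * t)))
    ∧ (∀ t ≥ (0:ℝ), N t ≥ min (K * (b - μ3') / b) (N 0))
    ∧ K * (b - μ3') / b ≤ liminf N atTop := by
  have ha : (0:ℝ) < b - μ3' := by linarith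
  have hKne : K ≠ 0 := ne_of_gt hK
  have hcK : 0 < b / K := div_pos hb hK
  have hq : 0 < b / (K * (b - μ3')) := div_pos hb (mul_pos hK ha)
  set Df : ℝ → ℝ := fun t => b * (1 - N t / K) * N t
      - (μ0 * S t + μ1' * I1 t + μ2' * I2 t + μ3' * I12 t + μ4' * R t) with hDf
  -- derivative of N
  have hND : ∀ t ≥ (0:ℝ), HasDerivAt N (Df t) t := by
    intro t ht
    have h := ((((hS t ht).add (hI1 t ht)).add (hI2 t ht)).add (hI12 t ht)).add (hR t ht)
    have h2 := h.congr_of_eventuallyEq (Filter.Eventually.of_forall hN)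
    refine h2.congr_deriv ?_
    simp only [hDf]
    rw [hN t, hμ1, hμ2, hμ3]; ring
  have hNnn : ∀ t ≥ (0:ℝ), 0 ≤ N t := by
    intro t ht
    obtain ⟨h1, h2, h3, h4, h5⟩ := hnonneg t ht
    rw [hN t]; linarith
  -- key differential inequality
  have hkey : ∀ t ≥ (0:ℝ), (b - μ3') * N t - (b / K) * N t ^ 2 ≤ Df t := by
    intro t ht
    obtain ⟨h1, h2, h3, h4, h5⟩ := hnonneg t ht
    have m1 : μ0 * S t ≤ μ3' * S t := mul_le_mul_of_nonneg_right hμ03 h1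
    have m2 : μ1' * I1 t ≤ μ3' * I1 t := mul_le_mul_of_nonneg_right hμ13 h2
    have m3 : μ2' * I2 t ≤ μ3' * I2 t := mul_le_mul_of_nonneg_right hμ23 h3
    have m5 : μ4' * R t ≤ μ3' * R t := mul_le_mul_of_nonneg_right hμ43 h5
    have e0 : b * (1 - N t / K) * N t = b * N t - (b / K) * N t ^ 2 := by
      field_simp
    have eμ : μ0 * S t + μ1' * I1 t + μ2' * I2 t + μ3' * I12 t + μ4' * R t ≤ μ3' * N t := by
      rw [hN t]; linarith
    simp only [hDf]
    rw [e0]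
    linarith
  -- positivity of N
  have hNpos : ∀ t ≥ (0:ℝ), 0 < N t := by
    intro T hT
    rcases eq_or_lt_of_le hT with h0 | hTpos
    · rw [← h0]; exact hN0
    have hcN : ContinuousOn N (Set.Icc 0 T) :=
      fun s hs => ((hND s hs.1).continuousAt).continuousWithinAt
    obtain ⟨M, hM⟩ := (isCompact_Icc.image_of_continuousOn hcN).bddAbove
    have hMba : ∀ s ∈ Set.Icc (0:ℝ) T, N s ≤ M := fun s hs => hM (Set.mem_image_of_mem N hs)
    have hzd : ∀ s ≥ (0:ℝ), HasDerivAt (fun s => Real.exp (b / K * M * s) * N s)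
        (Real.exp (b / K * M * s) * (b / K * M) * N s + Real.exp (b / K * M * s) * Df s) s := by
      intro s hs
      have he' : HasDerivAt (fun x : ℝ => b / K * M * x) (b / K * M) s := by
        simpa using (hasDerivAt_id s).const_mul (b / K * M)
      exact he'.exp.mul (hND s hs)
    have hmono : MonotoneOn (fun s => Real.exp (b / K * M * s) * N s) (Set.Icc 0 T) := by
      apply monotoneOn_of_deriv_nonneg (convex_Icc 0 T)
      · exact fun s hs => ((hzd s hs.1).continuousAt).continuousWithinAt
      · intro s hs
        rw [interior_Icc] at hs
        exact ((hzd s hs.1.le).differentiableAt).differentiableWithinAt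
      · intro s hs
        rw [interior_Icc] at hs
        rw [(hzd s hs.1.le).deriv]
        have hs0 : (0:ℝ) ≤ s := hs.1.le
        have hNs : 0 ≤ N s := hNnn s hs0
        have hk := hkey s hs0
        have hMs := hMba s ⟨hs0, hs.2.le⟩
        have hE := Real.exp_pos (b / K * M * s)
        have key2 : 0 ≤ b / K * M * N s + Df s := by
          nlinarith [mul_nonneg (le_of_lt hcK) (mul_nonneg hNs (sub_nonneg.mpr hMs)),
            mul_nonneg (le_of_lt ha) hNs]
        nlinarith [mul_nonneg hE.le key2]
    have h0T := hmono (Set.left_mem_Icc.mpr hT) (Set.right_mem_Icc.mpr hT) hT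
    simp only [mul_zero, Real.exp_zero, one_mul] at h0T
    by_contra hcon
    push_neg at hcon
    have : Real.exp (b / K * M * T) * N T ≤ 0 :=
      mul_nonpos_of_nonneg_of_nonpos (Real.exp_pos _).le hcon
    linarith
  -- boundedness of N from above
  have hNub : ∀ t ≥ (0:ℝ), N t ≤ max (N 0) K := by
    intro t1 ht1
    by_contra hcon
    push_neg at hcon
    have hB0 : N 0 ≤ max (N 0) K := le_max_left _ _
    have hBK : K ≤ max (N 0) K := le_max_right _ _
    have hcN : ContinuousOn N (Set.Icc 0 t1) :=
      fun s hs => ((hND s hs.1).continuousAt).continuousWithinAt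
    have hEcl : IsClosed (Set.Icc (0:ℝ) t1 ∩ N ⁻¹' Set.Iic (max (N 0) K)) :=
      hcN.preimage_isClosed_of_isClosed isClosed_Icc isClosed_Iic
    have hEcomp : IsCompact (Set.Icc (0:ℝ) t1 ∩ N ⁻¹' Set.Iic (max (N 0) K)) :=
      isCompact_Icc.of_isClosed_subset hEcl Set.inter_subset_left
    have hEne : (Set.Icc (0:ℝ) t1 ∩ N ⁻¹' Set.Iic (max (N 0) K)).Nonempty :=
      ⟨0, ⟨Set.left_mem_Icc.mpr ht1, hB0⟩⟩
    set t0 := sSup (Set.Icc (0:ℝ) t1 ∩ N ⁻¹' Set.Iic (max (N 0) K)) with ht0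
    have ht0mem := hEcomp.sSup_mem hEne
    rw [← ht0] at ht0mem
    obtain ⟨⟨ht00, ht01⟩, ht0B⟩ := ht0mem
    simp only [Set.mem_preimage, Set.mem_Iic] at ht0B
    have hover : ∀ s ∈ Set.Ioo t0 t1, max (N 0) K < N s := by
      intro s hs
      by_contra hns
      push_neg at hns
      have hsmem : s ∈ Set.Icc (0:ℝ) t1 ∩ N ⁻¹' Set.Iic (max (N 0) K) :=
        ⟨⟨le_trans ht00 hs.1.le, hs.2.le⟩, hns⟩
      have : s ≤ t0 := le_csSup (hEcomp.bddAbove) hsmem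
      exact absurd this (not_le.mpr hs.1)
    have hanti : AntitoneOn N (Set.Icc t0 t1) := by
      apply antitoneOn_of_deriv_nonpos (convex_Icc t0 t1)
      · exact fun s hs => ((hND s (le_trans ht00 hs.1)).continuousAt).continuousWithinAt
      · intro s hs
        rw [interior_Icc] at hs
        exact ((hND s (le_trans ht00 hs.1.le)).differentiableAt).differentiableWithinAt
      · intro s hs
        rw [interior_Icc] at hs
        have hs0 : (0:ℝ) ≤ s := le_trans ht00 hs.1.le
        rw [(hND s hs0).deriv]
        obtain ⟨h1, h2, h3, h4, h5⟩ := hnonneg s hs0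
        have hNs : max (N 0) K < N s := hover s hs
        have hNs0 : 0 ≤ N s := hNnn s hs0
        have h6 : 1 - N s / K ≤ 0 := by
          rw [sub_nonpos, le_div_iff₀ hK]
          nlinarith
        have h7 : b * (1 - N s / K) * N s ≤ 0 :=
          mul_nonpos_of_nonpos_of_nonneg (mul_nonpos_of_nonneg_of_nonpos hb.le h6) hNs0
        simp only [hDf]
        nlinarith [mul_nonneg hμ0.le h1, mul_nonneg hμ1'.le h2, mul_nonneg hμ2'.le h3,
          mul_nonneg hμ3'.le h4, mul_nonneg hμ4'.le h5]
    have := hanti (Set.left_mem_Icc.mpr ht01) (Set.right_mem_Icc.mpr ht01) ht01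
    linarith
  -- inverse trick
  have inv_trick : ∀ x y : ℝ, 0 < x → 0 < y → (x)⁻¹ ≤ y → 1 / y ≤ x := by
    intro x y hx hy hxy
    rw [div_le_iff₀ hy]
    calc (1:ℝ) = x * x⁻¹ := (mul_inv_cancel₀ hx.ne').symm
    _ ≤ x * y := mul_le_mul_of_nonneg_left hxy hx.le
  -- main Bernoulli/Gronwall estimate
  have hmain : ∀ t ≥ (0:ℝ), (N t)⁻¹ ≤ (b / (K * (b - μ3'))) * (1 - Real.exp (-(b - μ3') * t))
      + (1 / N 0) * Real.exp (-(b - μ3') * t) := by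
    intro t ht
    have hwd : ∀ s ≥ (0:ℝ), HasDerivAt
        (fun s => Real.exp ((b - μ3') * s) * (N s)⁻¹
          - (b / (K * (b - μ3'))) * Real.exp ((b - μ3') * s))
        (Real.exp ((b - μ3') * s) * (b - μ3') * (N s)⁻¹
          + Real.exp ((b - μ3') * s) * (-(Df s) / N s ^ 2)
          - (b / (K * (b - μ3'))) * (Real.exp ((b - μ3') * s) * (b - μ3'))) s := by
      intro s hs
      have he' : HasDerivAt (fun x : ℝ => (b - μ3') * x) (b - μ3') s := by
        simpa using (hasDerivAt_id s).const_mul (b - μ3')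
      have hi : HasDerivAt (fun s => (N s)⁻¹) (-(Df s) / N s ^ 2) s :=
        (hND s hs).inv (ne_of_gt (hNpos s hs))
      exact (he'.exp.mul hi).sub (he'.exp.const_mul _)
    have hanti : AntitoneOn (fun s => Real.exp ((b - μ3') * s) * (N s)⁻¹
        - (b / (K * (b - μ3'))) * Real.exp ((b - μ3') * s)) (Set.Icc 0 t) := by
      apply antitoneOn_of_deriv_nonpos (convex_Icc 0 t)
      · exact fun s hs => ((hwd s hs.1).continuousAt).continuousWithinAt
      · intro s hs
        rw [interior_Icc] at hs
        exact ((hwd s hs.1.le).differentiableAt).differentiableWithinAt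
      · intro s hs
        rw [interior_Icc] at hs
        have hs0 : (0:ℝ) ≤ s := hs.1.le
        rw [(hwd s hs0).deriv]
        have hNs := hNpos s hs0
        have hk := hkey s hs0
        have hEp := Real.exp_pos ((b - μ3') * s)
        have hfact : Real.exp ((b - μ3') * s) * (b - μ3') * (N s)⁻¹
            + Real.exp ((b - μ3') * s) * (-(Df s) / N s ^ 2)
            - (b / (K * (b - μ3'))) * (Real.exp ((b - μ3') * s) * (b - μ3'))
            = Real.exp ((b - μ3') * s)
              * (((b - μ3') * N s - Df s - (b / K) * N s ^ 2) / N s ^ 2) := by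
          field_simp
          ring
        rw [hfact]
        apply mul_nonpos_of_nonneg_of_nonpos hEp.le
        apply div_nonpos_of_nonpos_of_nonneg _ (sq_nonneg _)
        linarith
    have hwt := hanti (Set.left_mem_Icc.mpr ht) (Set.right_mem_Icc.mpr ht) ht
    simp only [mul_zero, Real.exp_zero, one_mul, mul_one] at hwt
    have hEmpos := Real.exp_pos (-((b - μ3') * t))
    have hprod : Real.exp (-((b - μ3') * t)) * Real.exp ((b - μ3') * t) = 1 := by
      rw [← Real.exp_add]; simp
    have hmul := mul_le_mul_of_nonneg_left hwt hEmpos.le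
    have h6 : Real.exp (-((b - μ3') * t)) * (Real.exp ((b - μ3') * t) * (N t)⁻¹
        - (b / (K * (b - μ3'))) * Real.exp ((b - μ3') * t))
        = (N t)⁻¹ - (b / (K * (b - μ3'))) := by
      calc Real.exp (-((b - μ3') * t)) * (Real.exp ((b - μ3') * t) * (N t)⁻¹
          - (b / (K * (b - μ3'))) * Real.exp ((b - μ3') * t))
          = (Real.exp (-((b - μ3') * t)) * Real.exp ((b - μ3') * t)) * (N t)⁻¹
            - (b / (K * (b - μ3'))) * (Real.exp (-((b - μ3') * t)) * Real.exp ((b - μ3') * t)) := by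
            ring
      _ = (N t)⁻¹ - (b / (K * (b - μ3'))) := by rw [hprod]; ring
    rw [h6] at hmul
    have harg : -(b - μ3') * t = -((b - μ3') * t) := by ring
    rw [harg, one_div]
    linarith
  -- positivity and upper bound of the denominator
  have hE1 : ∀ t ≥ (0:ℝ), Real.exp (-(b - μ3') * t) ≤ 1 := by
    intro t ht
    apply Real.exp_le_one_iff.mpr
    nlinarith
  have hDpos : ∀ t ≥ (0:ℝ), 0 < (b / (K * (b - μ3'))) * (1 - Real.exp (-(b - μ3') * t))
      + (1 / N 0) * Real.exp (-(b - μ3') * t) := by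
    intro t ht
    have hEp : 0 < Real.exp (-(b - μ3') * t) := Real.exp_pos _
    have hN0' : 0 < 1 / N 0 := by positivity
    nlinarith [mul_pos hN0' hEp, mul_nonneg hq.le (sub_nonneg.mpr (hE1 t ht))]
  -- first conclusion
  have concl1 : ∀ t ≥ (0:ℝ), N t ≥ 1 / ((b / (K * (b - μ3'))) * (1 - Real.exp (-(b - μ3') * t))
      + (1 / N 0) * Real.exp (-(b - μ3') * t)) := by
    intro t ht
    exact inv_trick _ _ (hNpos t ht) (hDpos t ht) (hmain t ht)
  -- second conclusion
  have concl2 : ∀ t ≥ (0:ℝ), N t ≥ min (K * (b - μ3') / b) (N 0) := by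
    intro t ht
    have hm := hmain t ht
    have hEp : 0 < Real.exp (-(b - μ3') * t) := Real.exp_pos _
    have h1E := hE1 t ht
    have hN0' : 0 < 1 / N 0 := by positivity
    have hmaxpos : 0 < max (b / (K * (b - μ3'))) (1 / N 0) := lt_max_of_lt_left hq
    have hmax : (b / (K * (b - μ3'))) * (1 - Real.exp (-(b - μ3') * t))
        + (1 / N 0) * Real.exp (-(b - μ3') * t) ≤ max (b / (K * (b - μ3'))) (1 / N 0) := by
      have g1 := mul_le_mul_of_nonneg_right (le_max_left (b / (K * (b - μ3'))) (1 / N 0))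
        (sub_nonneg.mpr h1E)
      have g2 := mul_le_mul_of_nonneg_right (le_max_right (b / (K * (b - μ3'))) (1 / N 0)) hEp.le
      nlinarith
    have hNge : 1 / max (b / (K * (b - μ3'))) (1 / N 0) ≤ N t :=
      inv_trick _ _ (hNpos t ht) hmaxpos (hm.trans hmax)
    rcases max_cases (b / (K * (b - μ3'))) (1 / N 0) with ⟨heq, _⟩ | ⟨heq, _⟩
    · rw [heq] at hNge
      rw [one_div_div] at hNge
      exact le_trans (min_le_left _ _) hNge
    · rw [heq, one_div_one_div] at hNge
      exact le_trans (min_le_right _ _) hNge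
  refine ⟨concl1, concl2, ?_⟩
  -- liminf conclusion
  have hEtend : Tendsto (fun t : ℝ => Real.exp (-(b - μ3') * t)) atTop (𝓝 0) := by
    have h1 : Tendsto (fun t : ℝ => -(b - μ3') * t) atTop atBot :=
      tendsto_id.const_mul_atTop_of_neg (by linarith)
    exact Real.tendsto_exp_atBot.comp h1
  have hDtend : Tendsto (fun t : ℝ => (b / (K * (b - μ3'))) * (1 - Real.exp (-(b - μ3') * t))
      + (1 / N 0) * Real.exp (-(b - μ3') * t)) atTop (𝓝 (b / (K * (b - μ3')))) := by
    have h1 : Tendsto (fun _ : ℝ => (1:ℝ)) atTop (𝓝 1) := tendsto_const_nhds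
    have := ((h1.sub hEtend).const_mul (b / (K * (b - μ3')))).add (hEtend.const_mul (1 / N 0))
    simpa using this
  have hinvDtend : Tendsto (fun t : ℝ => 1 / ((b / (K * (b - μ3'))) * (1 - Real.exp (-(b - μ3') * t))
      + (1 / N 0) * Real.exp (-(b - μ3') * t))) atTop (𝓝 (K * (b - μ3') / b)) := by
    have := hDtend.inv₀ (ne_of_gt hq)
    simpa [one_div, inv_div] using this
  have hle : ∀ᶠ t in atTop, 1 / ((b / (K * (b - μ3'))) * (1 - Real.exp (-(b - μ3') * t))
      + (1 / N 0) * Real.exp (-(b - μ3') * t)) ≤ N t :=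
    (eventually_ge_atTop 0).mono fun t ht => concl1 t ht
  have hbdd : IsBoundedUnder (· ≥ ·) atTop (fun t : ℝ => 1 / ((b / (K * (b - μ3')))
      * (1 - Real.exp (-(b - μ3') * t)) + (1 / N 0) * Real.exp (-(b - μ3') * t))) :=
    hinvDtend.isBoundedUnder_ge
  have hcob : IsCoboundedUnder (· ≥ ·) atTop N := by
    apply Filter.IsBoundedUnder.isCoboundedUnder_ge
    exact ⟨max (N 0) K, Filter.eventually_map.mpr
      ((eventually_ge_atTop 0).mono fun t ht => hNub t ht)⟩
  have hll := Filter.liminf_le_liminf hle hbdd hcob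
  calc K * (b - μ3') / b
      = liminf (fun t : ℝ => 1 / ((b / (K * (b - μ3'))) * (1 - Real.exp (-(b - μ3') * t))
        + (1 / N 0) * Real.exp (-(b - μ3') * t))) atTop := hinvDtend.liminf_eq.symm
  _ ≤ liminf N atTop := hll
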